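/- The system of equations (i) 1 + d^2 - 2d·cos(α) = 2 - 2·cos(β), (ii) 3α + β = π/2, (iii) d = (2·sin(α) + 1)/(2·sin(2α + β)), in the unknowns α ∈ (0, π/6), β ∈ (0, π/8), d ∈ (0,1], has a solution with α ∈ (0.394243, 0.394244), β ∈ (0.388066, 0.388067), and d ∈ (0.957566, 0.957567). -/

import Mathlib

open Real
open Real Set

private lemma nonneg_aux (f f' : ℝ → ℝ) (hf : ∀ y, HasDerivAt f (f' y) y)
    (h0 : f 0 = 0) (hd : ∀ y, 0 ≤ y → 0 ≤ f' y) {x : ℝ} (hx : 0 ≤ x) : 0 ≤ f x := by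
  have hmono : MonotoneOn f (Set.Ici 0) := by
    apply monotoneOn_of_deriv_nonneg (convex_Ici 0)
    · exact fun y _ => (hf y).differentiableAt.continuousAt.continuousWithinAt
    · exact fun y _ => (hf y).differentiableAt.differentiableWithinAt
    · intro y hy
      rw [(hf y).deriv]
      exact hd y (le_of_lt (by simpa [interior_Ici] using hy))
  simpa [h0] using hmono Set.self_mem_Ici hx hx

private lemma T1 {x : ℝ} (hx : 0 ≤ x) : sin x ≤ x := by
  have := nonneg_aux (fun y => y - sin y) (fun y => 1 - cos y)
    (fun y => (hasDerivAt_id y).sub (Real.hasDerivAt_sin y))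
    (by simp) (fun y _ => by nlinarith [Real.cos_le_one y]) hx
  linarith

private lemma T2 {x : ℝ} (hx : 0 ≤ x) : 1 - x^2/2 ≤ cos x := by
  have := nonneg_aux (fun y => cos y - (1 - y^2/2)) (fun y => y - sin y)
    (fun y => by
      have h := (Real.hasDerivAt_cos y).sub
        ((hasDerivAt_const y (1:ℝ)).sub ((hasDerivAt_pow 2 y).div_const 2))
      refine h.congr_deriv ?_
      push_cast
      ring)
    (by norm_num) (fun y hy => by nlinarith [T1 hy]) hx
  linarith

private lemma T3 {x : ℝ} (hx : 0 ≤ x) : x - x^3/6 ≤ sin x := by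
  have := nonneg_aux (fun y => sin y - (y - y^3/6)) (fun y => cos y - (1 - y^2/2))
    (fun y => by
      have h := (Real.hasDerivAt_sin y).sub
        ((hasDerivAt_id y).sub ((hasDerivAt_pow 3 y).div_const 6))
      refine h.congr_deriv ?_
      push_cast
      ring)
    (by norm_num) (fun y hy => by nlinarith [T2 hy]) hx
  linarith

private lemma T4 {x : ℝ} (hx : 0 ≤ x) : cos x ≤ 1 - x^2/2 + x^4/24 := by
  have := nonneg_aux (fun y => (1 - y^2/2 + y^4/24) - cos y)
    (fun y => sin y - (y - y^3/6))
    (fun y => by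
      have h := (((hasDerivAt_const y (1:ℝ)).sub ((hasDerivAt_pow 2 y).div_const 2)).add
        ((hasDerivAt_pow 4 y).div_const 24)).sub (Real.hasDerivAt_cos y)
      refine h.congr_deriv ?_
      push_cast
      ring)
    (by norm_num) (fun y hy => by nlinarith [T3 hy]) hx
  linarith

private lemma T5 {x : ℝ} (hx : 0 ≤ x) : sin x ≤ x - x^3/6 + x^5/120 := by
  have := nonneg_aux (fun y => (y - y^3/6 + y^5/120) - sin y)
    (fun y => (1 - y^2/2 + y^4/24) - cos y)
    (fun y => by
      have h := (((hasDerivAt_id y).sub ((hasDerivAt_pow 3 y).div_const 6)).add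
        ((hasDerivAt_pow 5 y).div_const 120)).sub (Real.hasDerivAt_sin y)
      refine h.congr_deriv ?_
      push_cast
      ring)
    (by norm_num) (fun y hy => by nlinarith [T4 hy]) hx
  linarith

private lemma T6 {x : ℝ} (hx : 0 ≤ x) : 1 - x^2/2 + x^4/24 - x^6/720 ≤ cos x := by
  have := nonneg_aux (fun y => cos y - (1 - y^2/2 + y^4/24 - y^6/720))
    (fun y => (y - y^3/6 + y^5/120) - sin y)
    (fun y => by
      have h := (Real.hasDerivAt_cos y).sub
        ((((hasDerivAt_const y (1:ℝ)).sub ((hasDerivAt_pow 2 y).div_const 2)).add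
          ((hasDerivAt_pow 4 y).div_const 24)).sub ((hasDerivAt_pow 6 y).div_const 720))
      refine h.congr_deriv ?_
      push_cast
      ring)
    (by norm_num) (fun y hy => by nlinarith [T5 hy]) hx
  linarith

private lemma T7 {x : ℝ} (hx : 0 ≤ x) : x - x^3/6 + x^5/120 - x^7/5040 ≤ sin x := by
  have := nonneg_aux (fun y => sin y - (y - y^3/6 + y^5/120 - y^7/5040))
    (fun y => cos y - (1 - y^2/2 + y^4/24 - y^6/720))
    (fun y => by
      have h := (Real.hasDerivAt_sin y).sub
        ((((hasDerivAt_id y).sub ((hasDerivAt_pow 3 y).div_const 6)).add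
          ((hasDerivAt_pow 5 y).div_const 120)).sub ((hasDerivAt_pow 7 y).div_const 5040))
      refine h.congr_deriv ?_
      push_cast
      ring)
    (by norm_num) (fun y hy => by nlinarith [T6 hy]) hx
  linarith

private lemma T8 {x : ℝ} (hx : 0 ≤ x) :
    cos x ≤ 1 - x^2/2 + x^4/24 - x^6/720 + x^8/40320 := by
  have := nonneg_aux (fun y => (1 - y^2/2 + y^4/24 - y^6/720 + y^8/40320) - cos y)
    (fun y => sin y - (y - y^3/6 + y^5/120 - y^7/5040))
    (fun y => by
      have h := (((((hasDerivAt_const y (1:ℝ)).sub ((hasDerivAt_pow 2 y).div_const 2)).add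
        ((hasDerivAt_pow 4 y).div_const 24)).sub ((hasDerivAt_pow 6 y).div_const 720)).add
        ((hasDerivAt_pow 8 y).div_const 40320)).sub (Real.hasDerivAt_cos y)
      refine h.congr_deriv ?_
      push_cast
      ring)
    (by norm_num) (fun y hy => by nlinarith [T7 hy]) hx
  linarith

private lemma T9 {x : ℝ} (hx : 0 ≤ x) :
    sin x ≤ x - x^3/6 + x^5/120 - x^7/5040 + x^9/362880 := by
  have := nonneg_aux (fun y => (y - y^3/6 + y^5/120 - y^7/5040 + y^9/362880) - sin y)
    (fun y => (1 - y^2/2 + y^4/24 - y^6/720 + y^8/40320) - cos y)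
    (fun y => by
      have h := (((((hasDerivAt_id y).sub ((hasDerivAt_pow 3 y).div_const 6)).add
        ((hasDerivAt_pow 5 y).div_const 120)).sub ((hasDerivAt_pow 7 y).div_const 5040)).add
        ((hasDerivAt_pow 9 y).div_const 362880)).sub (Real.hasDerivAt_sin y)
      refine h.congr_deriv ?_
      push_cast
      ring)
    (by norm_num) (fun y hy => by nlinarith [T8 hy]) hx
  linarith

private lemma pA (s : ℝ) (h1 : 0.3841095542431 ≤ s) (h2 : s ≤ 0.38410956) :
    32*s^5 - 48*s^3 + 12*s^2 + 20*s - 7 < 0 := by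
  have hq : 0 < 32*(s^4 + 0.38410956*s^3 + 0.38410956^2*s^2 + 0.38410956^3*s + 0.38410956^4)
      - 48*(s^2 + 0.38410956*s + 0.38410956^2) + 12*(s + 0.38410956) + 20 := by
    nlinarith [mul_nonneg (sub_nonneg.2 h1) (sub_nonneg.2 h2), sq_nonneg s, sq_nonneg (s*s)]
  have h3 : (s - 0.38410956) * (32*(s^4 + 0.38410956*s^3 + 0.38410956^2*s^2
      + 0.38410956^3*s + 0.38410956^4) - 48*(s^2 + 0.38410956*s + 0.38410956^2)
      + 12*(s + 0.38410956) + 20) ≤ 0 :=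
    mul_nonpos_of_nonpos_of_nonneg (by linarith) hq.le
  nlinarith [h3]

private lemma pB (s : ℝ) (h1 : 0.3841096 ≤ s) (h2 : s ≤ 0.384109647206) :
    0 < 32*s^5 - 48*s^3 + 12*s^2 + 20*s - 7 := by
  have hq : 0 < 32*(s^4 + 0.3841096*s^3 + 0.3841096^2*s^2 + 0.3841096^3*s + 0.3841096^4)
      - 48*(s^2 + 0.3841096*s + 0.3841096^2) + 12*(s + 0.3841096) + 20 := by
    nlinarith [mul_nonneg (sub_nonneg.2 h1) (sub_nonneg.2 h2), sq_nonneg s, sq_nonneg (s*s)]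
  have h3 : 0 ≤ (s - 0.3841096) * (32*(s^4 + 0.3841096*s^3 + 0.3841096^2*s^2
      + 0.3841096^3*s + 0.3841096^4) - 48*(s^2 + 0.3841096*s + 0.3841096^2)
      + 12*(s + 0.3841096) + 20) :=
    mul_nonneg (by linarith) hq.le
  nlinarith [h3]

set_option maxHeartbeats 1000000 in
theorem F8_system_has_solution :
    ∃ α β d : ℝ,
      (0 < α ∧ α < π/6) ∧ (0 < β ∧ β < π/8) ∧ (0 < d ∧ d ≤ 1) ∧
      1 + d^2 - 2*d*cos α = 2 - 2*cos β ∧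
      3*α + β = π/2 ∧
      d = (2*sin α + 1) / (2*sin (2*α + β)) ∧
      (0.394243 < α ∧ α < 0.394244) ∧
      (0.388066 < β ∧ β < 0.388067) ∧
      (0.957566 < d ∧ d < 0.957567) := by
  have pi_gt := Real.pi_gt_d6
  have pi_lt := Real.pi_lt_d6
  -- bounds for sin at the endpoints
  have hsa_lo : (0.3841095542431:ℝ) ≤ sin 0.3942432 :=
    le_trans (by norm_num) (T7 (by norm_num))
  have hsa_hi : sin 0.3942432 ≤ 0.38410956 :=
    le_trans (T9 (by norm_num)) (by norm_num)
  have hsb_lo : (0.3841096:ℝ) ≤ sin 0.3942433 :=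
    le_trans (by norm_num) (T7 (by norm_num))
  have hsb_hi : sin 0.3942433 ≤ 0.384109647206 :=
    le_trans (T9 (by norm_num)) (by norm_num)
  -- intermediate value theorem
  have ha_neg : (fun x : ℝ => 32*(sin x)^5 - 48*(sin x)^3 + 12*(sin x)^2 + 20*(sin x) - 7)
      0.3942432 < 0 := by
    dsimp only
    exact pA _ hsa_lo hsa_hi
  have hb_pos : (0:ℝ) < (fun x : ℝ => 32*(sin x)^5 - 48*(sin x)^3 + 12*(sin x)^2
      + 20*(sin x) - 7) 0.3942433 := by
    dsimp only
    exact pB _ hsb_lo hsb_hi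
  have hcont : ContinuousOn (fun x : ℝ => 32*(sin x)^5 - 48*(sin x)^3 + 12*(sin x)^2
      + 20*(sin x) - 7) (Set.Icc 0.3942432 0.3942433) := by fun_prop
  obtain ⟨α, hαI, hα0⟩ := intermediate_value_Ioo (by norm_num) hcont ⟨ha_neg, hb_pos⟩
  obtain ⟨hα1, hα2⟩ := hαI
  dsimp only at hα0
  -- monotone bounds on sin α
  have hmemIcc : ∀ x : ℝ, (0.394243:ℝ) ≤ x → x ≤ 0.394244 →
      x ∈ Set.Icc (-(π/2)) (π/2) := by
    intro x hx1 hx2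
    constructor <;> nlinarith
  have hsl : sin 0.3942432 < sin α :=
    Real.strictMonoOn_sin (hmemIcc _ (by norm_num) (by norm_num))
      (hmemIcc _ (by linarith) (by linarith)) hα1
  have hsu : sin α < sin 0.3942433 :=
    Real.strictMonoOn_sin (hmemIcc _ (by linarith) (by linarith))
      (hmemIcc _ (by norm_num) (by norm_num)) hα2
  have hsL : (0.3841095542431:ℝ) ≤ sin α := by linarith
  have hsU : sin α ≤ 0.384109647206 := by linarith
  -- refine sin α bounds using the polynomial
  have hs1 : (0.38410956:ℝ) < sin α := by
    by_contra h
    push_neg at h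
    have := pA (sin α) hsL h
    linarith
  have hs2 : sin α < 0.3841096 := by
    by_contra h
    push_neg at h
    have := pB (sin α) h hsU
    linarith
  clear hsa_lo hsa_hi hsb_lo hsb_hi ha_neg hb_pos hcont hsl hsu hsL hsU hmemIcc
  -- cosine facts
  have hcpos : 0 < cos α :=
    Real.cos_pos_of_mem_Ioo ⟨by nlinarith, by nlinarith⟩
  have hc2 : cos α ^ 2 = 1 - sin α ^ 2 := by
    have := Real.sin_sq_add_cos_sq α
    linarith
  have hs1' : (0:ℝ) < sin α := by linarith
  have hcu : cos α ≤ 0.9232876 := by nlinarith [hc2, hcpos, mul_pos hs1' hs1']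
  have hcl : (0.9232875:ℝ) ≤ cos α := by nlinarith [hc2, hcpos, sq_nonneg (sin α), mul_self_nonneg (0.3841096 - sin α)]
  -- the solution
  refine ⟨α, π/2 - 3*α, (2*sin α + 1)/(2*cos α), ⟨by linarith, by nlinarith⟩,
    ⟨by nlinarith, by nlinarith⟩, ?_, ?_, by ring, ?_, ⟨by linarith, by linarith⟩,
    ⟨by nlinarith, by nlinarith⟩, ?_, ?_⟩
  · constructor
    · positivity
    · rw [div_le_one (by positivity)]
      nlinarith
  · -- equation (i)
    have hs3 : cos (π/2 - 3*α) = 3*sin α - 4*(sin α)^3 := by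
      rw [Real.cos_pi_div_two_sub, Real.sin_three_mul]
    rw [hs3]
    have h2c : (2*cos α) ≠ 0 := by positivity
    have hdc : (2*sin α + 1)/(2*cos α) * cos α = (2*sin α + 1)/2 := by
      field_simp
    have h4 : (2*cos α)^2 = 4 - 4*(sin α)^2 := by linear_combination 4*hc2
    have hd2 : ((2*sin α + 1)/(2*cos α))^2 * (4 - 4*(sin α)^2) = (2*sin α + 1)^2 := by
      rw [div_pow, ← h4, div_mul_cancel₀]
      positivity
    have hmul : (1 + ((2*sin α + 1)/(2*cos α))^2 - 2*((2*sin α + 1)/(2*cos α))*cos α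
        - (2 - 2*(3*sin α - 4*(sin α)^3))) * (4 - 4*(sin α)^2) = 0 := by
      linear_combination hd2 - (2*(4 - 4*(sin α)^2))*hdc + hα0
    have h40 : (0:ℝ) < 4 - 4*(sin α)^2 := by nlinarith
    have := mul_eq_zero.mp hmul
    rcases this with h | h
    · linarith
    · linarith
  · -- equation (iii)
    have harg : 2*α + (π/2 - 3*α) = π/2 - α := by ring
    rw [harg, Real.sin_pi_div_two_sub]
  · -- d lower bound
    rw [lt_div_iff₀ (by positivity)]
    nlinarith
  · -- d upper bound
    rw [div_lt_iff₀ (by positivity)]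
    nlinarith
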